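/- Fix a permutation π of V. Let p ∈ Fin n and let δ ∈ V be the vector with δ p = 1 and all other coordinates 0. Let a, b, c ∈ AddMonoidAlgebra ℝ V be such that every element of supp(a), supp(b), and supp(c) has p-th coordinate equal to 0, and suppose b ≠ 0. Suppose moreover there exist J₁, J₂ ∈ V with a + b * (the single generator δ with coefficient 1) = F̄_{J₁} and c = F̄_{J₂}. Then p ∈ nodes((a + b * δ) * c), i.e., there exists h ∈ supp((a + b * δ) * c) with h p = 1. -/

import Mathlib

open Finset

/-- The sign (-1)^{u·v} ∈ ℝ. -/
noncomputable def sgn {n : ℕ} (u v : Fin n → ZMod 2) : ℝ :=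
  if (∑ i, u i * v i) = (1 : ZMod 2) then -1 else 1

/-- Fourier coefficient a^J_I, for a permutation π of V = Fin n → ZMod 2. -/
noncomputable def fc {n : ℕ} (π : Equiv.Perm (Fin n → ZMod 2))
    (J I : Fin n → ZMod 2) : ℝ :=
  (1 / 2 ^ n) * ∑ x : Fin n → ZMod 2, sgn I x * sgn (π x) J

/-- The group algebra element F̄_J ∈ AddMonoidAlgebra ℝ V whose coefficient at g is a^J_g. -/
noncomputable def Fbar {n : ℕ} (π : Equiv.Perm (Fin n → ZMod 2))
    (J : Fin n → ZMod 2) : AddMonoidAlgebra ℝ (Fin n → ZMod 2) :=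
  ∑ g : Fin n → ZMod 2, AddMonoidAlgebra.single g (fc π J g)

lemma zmod2_cases (t : ZMod 2) : t = 0 ∨ t = 1 := by revert t; decide

lemma sgn_cases {n : ℕ} (u v : Fin n → ZMod 2) : sgn u v = 1 ∨ sgn u v = -1 := by
  unfold sgn; split <;> simp

lemma sgn_ne_zero {n : ℕ} (u v : Fin n → ZMod 2) : sgn u v ≠ 0 := by
  rcases sgn_cases u v with h | h <;> rw [h] <;> norm_num

lemma sgn_add_right {n : ℕ} (u x y : Fin n → ZMod 2) :
    sgn u (x + y) = sgn u x * sgn u y := by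
  unfold sgn
  have h : (∑ i, u i * (x + y) i) = (∑ i, u i * x i) + (∑ i, u i * y i) := by
    rw [← Finset.sum_add_distrib]
    exact Finset.sum_congr rfl fun i _ => by simp [mul_add]
  rw [h]
  rcases zmod2_cases (∑ i, u i * x i) with h1 | h1 <;>
    rcases zmod2_cases (∑ i, u i * y i) with h2 | h2 <;>
      rw [h1, h2] <;> norm_num <;> decide

lemma sgn_add_left {n : ℕ} (u v x : Fin n → ZMod 2) :
    sgn (u + v) x = sgn u x * sgn v x := by
  unfold sgn
  have h : (∑ i, (u + v) i * x i) = (∑ i, u i * x i) + (∑ i, v i * x i) := by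
    rw [← Finset.sum_add_distrib]
    exact Finset.sum_congr rfl fun i _ => by simp [add_mul]
  rw [h]
  rcases zmod2_cases (∑ i, u i * x i) with h1 | h1 <;>
    rcases zmod2_cases (∑ i, v i * x i) with h2 | h2 <;>
      rw [h1, h2] <;> norm_num <;> decide

lemma sgn_zero_left {n : ℕ} (v : Fin n → ZMod 2) : sgn 0 v = 1 := by
  unfold sgn
  simp

lemma addv_eq_zero_iff {n : ℕ} (x y : Fin n → ZMod 2) : x + y = 0 ↔ x = y := by
  constructor
  · intro h; funext i
    have := congrFun h i
    revert this
    have : ∀ a b : ZMod 2, a + b = 0 → a = b := by decide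
    exact fun h' => this _ _ h'
  · rintro rfl; funext i
    have : ∀ a : ZMod 2, a + a = 0 := by decide
    exact this _

/-- dot product with a standard basis vector. -/
lemma sum_mul_indicator {n : ℕ} (p : Fin n) (v : Fin n → ZMod 2) :
    (∑ i, v i * (if i = p then 1 else 0)) = v p := by
  simp [mul_ite, Finset.sum_ite_eq']

lemma sum_indicator_mul {n : ℕ} (p : Fin n) (v : Fin n → ZMod 2) :
    (∑ i, (if i = p then (1 : ZMod 2) else 0) * v i) = v p := by
  simp [ite_mul, Finset.sum_ite_eq']

lemma orth {n : ℕ} (z : Fin n → ZMod 2) :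
    (∑ g : Fin n → ZMod 2, sgn g z) = if z = 0 then (2 : ℝ) ^ n else 0 := by
  split
  · next hz =>
    subst hz
    have h1 : ∀ g : Fin n → ZMod 2, sgn g 0 = 1 := by
      intro g; unfold sgn; simp
    simp only [h1, Finset.sum_const, nsmul_eq_mul, mul_one]
    simp [Fintype.card_fun]
  · next hz =>
    have : ∃ q, z q ≠ 0 := by
      by_contra h; push_neg at h; exact hz (funext h)
    obtain ⟨q, hq⟩ := this
    have hzq : z q = 1 := (zmod2_cases (z q)).resolve_left hq
    set e : Fin n → ZMod 2 := fun i => if i = q then 1 else 0 with he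
    have hse : sgn e z = -1 := by
      unfold sgn
      rw [he]
      rw [sum_indicator_mul q z, hzq]
      simp
    have hrw : ∀ g : Fin n → ZMod 2, sgn (g + e) z = - sgn g z := by
      intro g; rw [sgn_add_left, hse]; ring
    have h2 : (∑ g : Fin n → ZMod 2, sgn (g + e) z) = ∑ g : Fin n → ZMod 2, sgn g z :=
      Fintype.sum_equiv (Equiv.addRight e) _ _ (fun g => rfl)
    have h3 : (∑ g : Fin n → ZMod 2, sgn (g + e) z)
        = - ∑ g : Fin n → ZMod 2, sgn g z := by
      simp [hrw]
    linarith [h2, h3.symm.trans h2]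

noncomputable def evHom {n : ℕ} (y : Fin n → ZMod 2) :
    Multiplicative (Fin n → ZMod 2) →* ℝ where
  toFun g := sgn (Multiplicative.toAdd g) y
  map_one' := sgn_zero_left y
  map_mul' g h := sgn_add_left _ _ _

noncomputable def ev {n : ℕ} (y : Fin n → ZMod 2) :
    AddMonoidAlgebra ℝ (Fin n → ZMod 2) →ₐ[ℝ] ℝ :=
  AddMonoidAlgebra.lift ℝ ℝ (Fin n → ZMod 2) (evHom y)

lemma ev_apply {n : ℕ} (y : Fin n → ZMod 2) (f : AddMonoidAlgebra ℝ (Fin n → ZMod 2)) :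
    ev y f = ∑ g : Fin n → ZMod 2, f.coeff g * sgn g y := by
  rw [ev, AddMonoidAlgebra.lift_apply, Finsupp.sum_fintype]
  · exact Finset.sum_congr rfl fun g _ => by simp [evHom, smul_eq_mul]
  · intro g; simp

lemma ev_Fbar {n : ℕ} (π : Equiv.Perm (Fin n → ZMod 2)) (K y : Fin n → ZMod 2) :
    ev y (Fbar π K) = sgn (π y) K := by
  have hcoef : ∀ g, (Fbar π K).coeff g = fc π K g := by
    intro g
    rw [Fbar]
    rw [AddMonoidAlgebra.coeff_sum, Finset.sum_apply']
    simp [Finsupp.single_apply, AddMonoidAlgebra.coeff_single]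
  rw [ev_apply]
  simp only [hcoef]
  unfold fc
  have hswap : (∑ g : Fin n → ZMod 2,
      ((1 / 2 ^ n : ℝ) * ∑ x : Fin n → ZMod 2, sgn g x * sgn (π x) K) * sgn g y)
      = (1 / 2 ^ n : ℝ) * ∑ x : Fin n → ZMod 2,
          (∑ g : Fin n → ZMod 2, sgn g x * sgn g y) * sgn (π x) K := by
    simp only [Finset.sum_mul, Finset.mul_sum]
    rw [Finset.sum_comm]
    exact Finset.sum_congr rfl fun x _ => Finset.sum_congr rfl fun g _ => by ring
  rw [hswap]
  have hinner : ∀ x : Fin n → ZMod 2,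
      (∑ g : Fin n → ZMod 2, sgn g x * sgn g y) = if x = y then (2:ℝ)^n else 0 := by
    intro x
    have : ∀ g : Fin n → ZMod 2, sgn g x * sgn g y = sgn g (x + y) := fun g =>
      (sgn_add_right g x y).symm
    simp only [this, orth, addv_eq_zero_iff x y]
  simp only [hinner]
  simp only [ite_mul, zero_mul]
  rw [Finset.sum_ite_eq' Finset.univ y (fun x => (2:ℝ)^n * sgn (π x) K)]
  have h2n : (2:ℝ)^n ≠ 0 := by positivity
  simp only [Finset.mem_univ, if_true]
  field_simp


lemma ev_single {n : ℕ} (y g : Fin n → ZMod 2) (r : ℝ) :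
    ev y (AddMonoidAlgebra.single g r) = r * sgn g y := by
  rw [ev_apply]
  simp [AddMonoidAlgebra.coeff_single, Finsupp.single_apply, ite_mul, Finset.sum_ite_eq]

lemma ev_shift {n : ℕ} (p : Fin n) (δ : Fin n → ZMod 2)
    (hδ : δ = fun i => if i = p then 1 else 0)
    (y : Fin n → ZMod 2) (f : AddMonoidAlgebra ℝ (Fin n → ZMod 2))
    (hf : ∀ g ∈ f.coeff.support, g p = 0) :
    ev (y + δ) f = ev y f := by
  rw [ev_apply, ev_apply]
  refine Finset.sum_congr rfl fun g _ => ?_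
  by_cases hg : f.coeff g = 0
  · simp [hg]
  · have hp := hf g (Finsupp.mem_support_iff.2 hg)
    have : sgn g δ = 1 := by
      unfold sgn
      rw [hδ, sum_mul_indicator p g, hp]
      simp
    rw [sgn_add_right, this, mul_one]

lemma sgn_comm {n : ℕ} (u v : Fin n → ZMod 2) : sgn u v = sgn v u := by
  unfold sgn
  rw [Finset.sum_congr rfl fun i _ => mul_comm (u i) (v i)]

lemma sgn_delta_delta {n : ℕ} (p : Fin n) (δ : Fin n → ZMod 2)
    (hδ : δ = fun i => if i = p then 1 else 0) : sgn δ δ = -1 := by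
  unfold sgn
  rw [show (∑ i, δ i * δ i) = δ p by rw [hδ]; exact sum_mul_indicator p _]
  rw [hδ]
  simp

lemma exists_ev_ne {n : ℕ} (b : AddMonoidAlgebra ℝ (Fin n → ZMod 2)) (hb : b ≠ 0) :
    ∃ y, ev y b ≠ 0 := by
  by_contra hcon
  push_neg at hcon
  apply hb
  ext g
  have h0 : (∑ y : Fin n → ZMod 2, sgn g y * ev y b) = 0 := by
    simp [hcon]
  have h1 : (∑ y : Fin n → ZMod 2, sgn g y * ev y b)
      = (2:ℝ)^n * b.coeff g := by
    have : ∀ y : Fin n → ZMod 2, sgn g y * ev y b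
        = ∑ h : Fin n → ZMod 2, b.coeff h * sgn (g + h) y := by
      intro y
      rw [ev_apply, Finset.mul_sum]
      exact Finset.sum_congr rfl fun h _ => by rw [sgn_add_left]; ring
    simp only [this]
    rw [Finset.sum_comm]
    have : ∀ h : Fin n → ZMod 2, (∑ y : Fin n → ZMod 2, b.coeff h * sgn (g + h) y)
        = b.coeff h * (if g = h then (2:ℝ)^n else 0) := by
      intro h
      rw [← Finset.mul_sum]
      congr 1
      rw [Finset.sum_congr rfl fun y _ => sgn_comm (g+h) y, orth]
      exact if_congr (addv_eq_zero_iff g h) rfl rfl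
    simp only [this, mul_ite, mul_zero]
    rw [Finset.sum_ite_eq Finset.univ g (fun h => b.coeff h * (2:ℝ)^n)]
    simp [mul_comm]
  rw [h0] at h1
  have h2n : (2:ℝ)^n ≠ 0 := by positivity
  simpa [h2n, eq_comm] using h1

/-- If a + b·δ and c are both images of J ↦ F̄_J, where a, b, c avoid the node p and
b ≠ 0, then the product (a + b·δ)·c uses the node p. -/
theorem node_of_product {n : ℕ} (hn : 1 ≤ n) (π : Equiv.Perm (Fin n → ZMod 2))
    (p : Fin n) (δ : Fin n → ZMod 2) (hδ : δ = fun i => if i = p then 1 else 0)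
    (a b c : AddMonoidAlgebra ℝ (Fin n → ZMod 2))
    (ha : ∀ g ∈ a.coeff.support, g p = 0)
    (hb : ∀ g ∈ b.coeff.support, g p = 0)
    (hc : ∀ g ∈ c.coeff.support, g p = 0)
    (hbne : b ≠ 0)
    (hab : ∃ J₁ : Fin n → ZMod 2,
      a + b * AddMonoidAlgebra.single δ (1 : ℝ) = Fbar π J₁)
    (hcc : ∃ J₂ : Fin n → ZMod 2, c = Fbar π J₂) :
    ∃ h ∈ ((a + b * AddMonoidAlgebra.single δ (1 : ℝ)) * c).coeff.support, h p = 1 := by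
  by_contra hcon
  push_neg at hcon
  set L := a + b * AddMonoidAlgebra.single δ (1 : ℝ) with hL
  have hsupp0 : ∀ h ∈ (L * c).coeff.support, h p = 0 := fun h hh =>
    (zmod2_cases (h p)).resolve_right (hcon h hh)
  obtain ⟨J₂, h2⟩ := hcc
  obtain ⟨y, hy⟩ := exists_ev_ne b hbne
  -- c evaluates to a nonzero number
  have hC : ev y c ≠ 0 := by
    rw [h2, ev_Fbar]; exact sgn_ne_zero _ _
  have hcinv : ev (y + δ) c = ev y c := ev_shift p δ hδ y c hc
  have hprod : ev (y + δ) (L * c) = ev y (L * c) := ev_shift p δ hδ y (L * c) hsupp0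
  rw [map_mul, map_mul, hcinv] at hprod
  have hLinv : ev (y + δ) L = ev y L := mul_right_cancel₀ hC hprod
  -- compute both sides
  have hevL : ∀ z, ev z L = ev z a + ev z b * sgn δ z := by
    intro z
    rw [hL, map_add, map_mul, ev_single, one_mul]
  have hainv : ev (y + δ) a = ev y a := ev_shift p δ hδ y a ha
  have hbinv : ev (y + δ) b = ev y b := ev_shift p δ hδ y b hb
  have hsd : sgn δ (y + δ) = - sgn δ y := by
    rw [sgn_add_right, sgn_delta_delta p δ hδ]; ring
  rw [hevL, hevL, hainv, hbinv, hsd] at hLinv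
  have : ev y b * sgn δ y = 0 := by linarith
  rcases mul_eq_zero.1 this with h | h
  · exact hy h
  · exact sgn_ne_zero δ y h
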